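/- arXiv:1605.06665 — 4 statements merged into one kernel-verified Lean document; each statement's English description precedes it below -/
import Mathlib

section
/- Let x, y, q ∈ ℝ^d with ‖x − y‖ ≤ 2n + 2ψ where ψ ≥ 0, and suppose the distance from q to the line segment from x to y is at least R > 0. Assume ‖x−q‖ + ‖q−y‖ ≤ 10n. Then ‖x−q‖ + ‖q−y‖ − ‖x−y‖ ≥ R²/(10n). (Additivity defect of the triangle inequality is at least quadratic in the transverse distance.) -/
open RealInnerProductSpace

theorem stmt8_aux (a b c R n i : ℝ) (hn : 0 < n) (hR : 0 < R)
    (hi : i ≤ a * b - 2 * R ^ 2) (hc2 : c ^ 2 = a ^ 2 + 2 * i + b ^ 2)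
    (hcab : c ≤ a + b) (hc0 : 0 ≤ c) (hsum : a + b ≤ 10 * n) :
    a + b - c ≥ R ^ 2 / (10 * n) := by
  have hnum : (a + b - c) * (a + b + c) ≥ 4 * R ^ 2 := by nlinarith
  rw [ge_iff_le, div_le_iff₀ (by positivity)]
  nlinarith [sq_nonneg R]


theorem stmt8 {d : ℕ} (x y q : EuclideanSpace ℝ (Fin d)) (n ψ R : ℝ)
    (hψ : 0 ≤ ψ) (hn : 0 < n) (hR : 0 < R)
    (hxy : ‖x - y‖ ≤ 2 * n + 2 * ψ)
    (hseg : ∀ p ∈ segment ℝ x y, R ≤ ‖q - p‖)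
    (hsum : ‖x - q‖ + ‖q - y‖ ≤ 10 * n) :
    ‖x - q‖ + ‖q - y‖ - ‖x - y‖ ≥ R ^ 2 / (10 * n) := by
  set u := x - q with hu
  set v := q - y with hv
  set a := ‖u‖ with ha
  set b := ‖v‖ with hb
  have haR : R ≤ a := by
    have h := hseg x (left_mem_segment ℝ x y)
    rwa [← norm_neg, neg_sub] at h
  have hbR : R ≤ b := hseg y (right_mem_segment ℝ x y)
  have hapos : 0 < a := lt_of_lt_of_le hR haR
  have hbpos : 0 < b := lt_of_lt_of_le hR hbR
  have habpos : 0 < a + b := by linarith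
  set t : ℝ := a / (a + b) with htdef
  have ht0 : 0 ≤ t := by positivity
  have ht1 : t ≤ 1 := by rw [htdef, div_le_one habpos]; linarith
  set p := (1 - t) • x + t • y with hp
  have hpseg : p ∈ segment ℝ x y := ⟨1 - t, t, by linarith, ht0, by ring, rfl⟩
  have hRp : R ≤ ‖q - p‖ := hseg p hpseg
  have h1 : (a + b) • (q - p) = a • v - b • u := by
    rw [hp, hu, hv, htdef]
    match_scalars <;> (field_simp; try ring)
  have h2 : ((a + b) * ‖q - p‖) ^ 2 = ‖a • v - b • u‖ ^ 2 := by
    rw [← h1, norm_smul, Real.norm_eq_abs, abs_of_pos habpos]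
  have h3 : ‖a • v - b • u‖ ^ 2 =
      a ^ 2 * b ^ 2 - 2 * (a * b) * (inner ℝ u v : ℝ) + b ^ 2 * a ^ 2 := by
    rw [@norm_sub_sq_real, norm_smul, norm_smul, real_inner_smul_left,
      real_inner_smul_right, real_inner_comm v u]
    simp [Real.norm_eq_abs, abs_of_pos hapos, abs_of_pos hbpos, ← ha, ← hb]
    ring
  have hRqp : R ^ 2 ≤ ‖q - p‖ ^ 2 := by
    have := norm_nonneg (q - p)
    nlinarith
  have key : (inner ℝ u v : ℝ) ≤ a * b - 2 * R ^ 2 := by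
    nlinarith [sq_nonneg (a - b), sq_nonneg (a + b), mul_pos hapos hbpos]
  have hxyuv : x - y = u + v := by rw [hu, hv]; abel
  have hc2 : ‖x - y‖ ^ 2 = a ^ 2 + 2 * (inner ℝ u v : ℝ) + b ^ 2 := by
    rw [hxyuv, @norm_add_sq_real]
  have hcab : ‖x - y‖ ≤ a + b := by rw [hxyuv]; exact norm_add_le u v
  have hc0 : (0:ℝ) ≤ ‖x - y‖ := norm_nonneg _
  exact stmt8_aux a b ‖x - y‖ R n (inner ℝ u v : ℝ) hn hR key hc2 hcab hc0 hsum
end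

section
/- Let x, q, y ∈ ℝ^d and write a = ‖x−q‖, b = ‖q−y‖, c = ‖x−y‖ with a, b > 0. Let h be the distance from q to the line through x and y. Then a + b − c ≥ h²/(a+b). -/
theorem stmt9 {d : ℕ} (x q y : EuclideanSpace ℝ (Fin d))
    (ha : 0 < ‖x - q‖) (hb : 0 < ‖q - y‖) :
    ‖x - q‖ + ‖q - y‖ - ‖x - y‖ ≥
      (Metric.infDist q (affineSpan ℝ ({x, y} : Set (EuclideanSpace ℝ (Fin d))) : Set (EuclideanSpace ℝ (Fin d)))) ^ 2
        / (‖x - q‖ + ‖q - y‖) := by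
  set a := ‖x - q‖ with ha'
  set b := ‖q - y‖ with hb'
  set c := ‖x - y‖ with hc'
  have hab : 0 < a + b := by linarith
  have hc : c ≤ a + b := by
    have := dist_triangle x q y
    simpa [dist_eq_norm] using this
  have hc0 : 0 ≤ c := norm_nonneg _
  set t : ℝ := a / (a + b) with ht
  have ht0 : 0 ≤ t := by positivity
  have ht1 : t ≤ 1 := by
    rw [ht, div_le_one hab]; linarith
  set z := AffineMap.lineMap x y t with hz
  have hzmem : z ∈ affineSpan ℝ ({x, y} : Set (EuclideanSpace ℝ (Fin d))) := by
    exact AffineMap.lineMap_mem t (mem_affineSpan ℝ (Set.mem_insert _ _))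
      (mem_affineSpan ℝ (Set.mem_insert_of_mem _ rfl))
  set h := Metric.infDist q (affineSpan ℝ ({x, y} : Set (EuclideanSpace ℝ (Fin d))) :
    Set (EuclideanSpace ℝ (Fin d))) with hh
  have hle : h ≤ dist q z := Metric.infDist_le_dist_of_mem hzmem
  have h0 : 0 ≤ h := Metric.infDist_nonneg
  set u := q - x with hu
  set v := q - y with hv
  have hua : ‖u‖ = a := by rw [hu, ha', norm_sub_rev]
  have huv : ‖u - v‖ = c := by
    have : u - v = y - x := by rw [hu, hv]; abel
    rw [this, hc', norm_sub_rev]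
  have hinner : (inner ℝ u v : ℝ) = (a^2 + b^2 - c^2) / 2 := by
    have := norm_sub_sq_real u v
    rw [huv, hua] at this
    linarith
  have hqz : q - z = (1 - t) • u + t • v := by
    rw [hz, AffineMap.lineMap_apply_module, hu, hv]
    module
  have hdist : dist q z ^ 2 = (1 - t) * a^2 + t * b^2 - t * (1 - t) * c^2 := by
    rw [dist_eq_norm, hqz, norm_add_sq_real, real_inner_smul_left,
      real_inner_smul_right, hinner, norm_smul, norm_smul, hua, ← hb']
    rw [Real.norm_eq_abs, Real.norm_eq_abs, abs_of_nonneg ht0,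
      abs_of_nonneg (by linarith : (0:ℝ) ≤ 1 - t)]
    ring
  have hsq : h ^ 2 ≤ (1 - t) * a^2 + t * b^2 - t * (1 - t) * c^2 := by
    rw [← hdist]
    exact pow_le_pow_left₀ h0 hle 2
  rw [ge_iff_le, div_le_iff₀ hab]
  have key : h ^ 2 * (a + b) ^ 2 ≤ a * b * ((a + b) ^ 2 - c ^ 2) := by
    have heq : ((1 - t) * a ^ 2 + t * b ^ 2 - t * (1 - t) * c ^ 2) * (a + b) ^ 2
        = a * b * ((a + b) ^ 2 - c ^ 2) := by
      rw [ht]; field_simp; ring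
    calc h ^ 2 * (a + b) ^ 2 ≤ ((1 - t) * a ^ 2 + t * b ^ 2 - t * (1 - t) * c ^ 2) * (a + b) ^ 2 :=
          mul_le_mul_of_nonneg_right hsq (by positivity)
      _ = a * b * ((a + b) ^ 2 - c ^ 2) := heq
  have h4 : a * b * (a + b + c) ≤ (a + b) ^ 3 := by
    nlinarith [sq_nonneg (a - b), mul_pos ha hb, hc0, hc]
  have hms : 0 ≤ a + b - c := by linarith
  have key2 : h ^ 2 * (a + b) ^ 2 ≤ ((a + b - c) * (a + b)) * (a + b) ^ 2 :=
    calc h ^ 2 * (a + b) ^ 2 ≤ a * b * ((a + b) ^ 2 - c ^ 2) := key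
      _ = (a + b - c) * (a * b * (a + b + c)) := by ring
      _ ≤ (a + b - c) * (a + b) ^ 3 := mul_le_mul_of_nonneg_left h4 hms
      _ = ((a + b - c) * (a + b)) * (a + b) ^ 2 := by ring
  exact le_of_mul_le_mul_right key2 (by positivity)
end

section
/- Let B₁* = {(x₁,x₂) ∈ ℝ×ℝ^{d−1} : |x₁| ≤ ψ, ‖x₂‖ ≤ u} and B₂* = n·e₁ + B₁*, where 0 < ψ ≤ n/10 and 0 < u with u² ≤ nψ. Then for every x ∈ B₁* and y ∈ B₂*: n − 2ψ ≤ ‖x−y‖ ≤ n + 2ψ + 4u²/(n + 2ψ); in particular if additionally u² ≤ ψ·n then ‖x−y‖ ≤ n + 6ψ. -/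
theorem stmt11 (m : ℕ) (n ψ u : ℝ)
    (hψ : 0 < ψ) (hψn : ψ ≤ n / 10) (hu : 0 < u) (hun : u ^ 2 ≤ n * ψ)
    (x y : WithLp 2 (ℝ × EuclideanSpace ℝ (Fin m)))
    (hx1 : |(WithLp.equiv 2 (ℝ × EuclideanSpace ℝ (Fin m)) x).1| ≤ ψ)
    (hx2 : ‖(WithLp.equiv 2 (ℝ × EuclideanSpace ℝ (Fin m)) x).2‖ ≤ u)
    (hy1 : |(WithLp.equiv 2 (ℝ × EuclideanSpace ℝ (Fin m)) y).1 - n| ≤ ψ)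
    (hy2 : ‖(WithLp.equiv 2 (ℝ × EuclideanSpace ℝ (Fin m)) y).2‖ ≤ u) :
    n - 2 * ψ ≤ ‖x - y‖ ∧
    ‖x - y‖ ≤ n + 2 * ψ + 4 * u ^ 2 / (n + 2 * ψ) ∧
    ‖x - y‖ ≤ n + 6 * ψ := by
  have hn : 10 * ψ ≤ n := by linarith
  set a : ℝ := (WithLp.equiv 2 (ℝ × EuclideanSpace ℝ (Fin m)) x).1 -
      (WithLp.equiv 2 (ℝ × EuclideanSpace ℝ (Fin m)) y).1 with ha
  set b := (WithLp.equiv 2 (ℝ × EuclideanSpace ℝ (Fin m)) x).2 -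
      (WithLp.equiv 2 (ℝ × EuclideanSpace ℝ (Fin m)) y).2 with hb
  have hsq : ‖x - y‖ ^ 2 = a ^ 2 + ‖b‖ ^ 2 := by
    rw [WithLp.prod_norm_sq_eq_of_L2]
    have h1 : (x - y).fst = a := rfl
    have h2 : (x - y).snd = b := rfl
    rw [h1, h2, Real.norm_eq_abs, sq_abs]
  have hban : ‖b‖ ≤ 2 * u := by
    calc ‖b‖ ≤ ‖(WithLp.equiv 2 (ℝ × EuclideanSpace ℝ (Fin m)) x).2‖ +
        ‖(WithLp.equiv 2 (ℝ × EuclideanSpace ℝ (Fin m)) y).2‖ := norm_sub_le _ _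
      _ ≤ 2 * u := by linarith
  have hb0 : (0:ℝ) ≤ ‖b‖ := norm_nonneg _
  have hN0 : (0:ℝ) ≤ ‖x - y‖ := norm_nonneg _
  have hax := abs_le.1 hx1
  have hay := abs_le.1 hy1
  have halo : n - 2 * ψ ≤ -a := by simp only [ha]; linarith
  have hahi : -a ≤ n + 2 * ψ := by simp only [ha]; linarith
  refine ⟨?_, ?_, ?_⟩
  · nlinarith [sq_nonneg ‖b‖, sq_nonneg (‖x - y‖ + a)]
  · set t : ℝ := 4 * u ^ 2 / (n + 2 * ψ) with htdef
    have hc : (0:ℝ) < n + 2 * ψ := by linarith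
    have ht : t * (n + 2 * ψ) = 4 * u ^ 2 := div_mul_cancel₀ _ (ne_of_gt hc)
    have ht0 : 0 ≤ t := div_nonneg (by positivity) hc.le
    nlinarith [sq_nonneg (‖x - y‖ - (n + 2 * ψ + t)), sq_nonneg ‖b‖]
  · nlinarith [sq_nonneg (‖x - y‖ - (n + 6 * ψ)), sq_nonneg ‖b‖]
end

section
/- Let x ∈ B̄₁ = {(x₁,x₂) : |x₁| ≤ ψ, ‖x₂‖ ≤ √(nψ)}, y ∈ B̄₂ = n·e₁ + B̄₁, and q = (q₁, q₂) with |q₁ − λ| ≤ ψ for some λ ∈ [w, n−w] and ‖q₂‖ ≥ K·v, where v = √(nψ)·L^β for parameters L ≥ 1, β = 1/(2κ₁), K·v ≥ 2√(nψ), ψ ≤ n/100, w ≥ 4ψ. Then ‖x−q‖ + ‖q−y‖ − ‖x−y‖ ≥ (K²/8)·ψ·L^{2β}. -/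
set_option maxHeartbeats 1000000

lemma aux_mink18 (a b c d : ℝ) :
    Real.sqrt ((a+c)^2 + (b+d)^2) ≤ Real.sqrt (a^2+b^2) + Real.sqrt (c^2+d^2) := by
  have h1 := Real.sqrt_nonneg (a^2+b^2)
  have h2 := Real.sqrt_nonneg (c^2+d^2)
  have e1 : (Real.sqrt (a^2+b^2))^2 = a^2+b^2 := Real.sq_sqrt (by positivity)
  have e2 : (Real.sqrt (c^2+d^2))^2 = c^2+d^2 := Real.sq_sqrt (by positivity)
  have key : (a+c)^2 + (b+d)^2 ≤ (Real.sqrt (a^2+b^2) + Real.sqrt (c^2+d^2))^2 := by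
    nlinarith only [e1, e2, h1, h2, sq_nonneg (a*d - b*c), mul_nonneg h1 h2,
      sq_nonneg (a*c + b*d - Real.sqrt (a^2+b^2) * Real.sqrt (c^2+d^2))]
  calc Real.sqrt ((a+c)^2 + (b+d)^2)
      ≤ Real.sqrt ((Real.sqrt (a^2+b^2) + Real.sqrt (c^2+d^2))^2) := Real.sqrt_le_sqrt key
    _ = _ := Real.sqrt_sq (by positivity)

theorem stmt18 (m : ℕ) (n ψ w v K L β κ₁ lam : ℝ)
    (hκ₁ : 0 < κ₁) (hβ : β = 1 / (2 * κ₁))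
    (hψ : 0 < ψ) (hψn : ψ ≤ n / 100) (hw : w ≥ 4 * ψ) (hL : 1 ≤ L)
    (hv : v = Real.sqrt (n * ψ) * L ^ β)
    (hKpos : 0 < K)
    (hKv : K * v ≥ 2 * Real.sqrt (n * ψ)) (hKv' : K * v ≤ n)
    (hlam : lam ∈ Set.Icc w (n - w))
    (x y q : WithLp 2 (ℝ × EuclideanSpace ℝ (Fin m)))
    (hx1 : |(WithLp.equiv 2 (ℝ × EuclideanSpace ℝ (Fin m)) x).1| ≤ ψ)
    (hx2 : ‖(WithLp.equiv 2 (ℝ × EuclideanSpace ℝ (Fin m)) x).2‖ ≤ Real.sqrt (n * ψ))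
    (hy1 : |(WithLp.equiv 2 (ℝ × EuclideanSpace ℝ (Fin m)) y).1 - n| ≤ ψ)
    (hy2 : ‖(WithLp.equiv 2 (ℝ × EuclideanSpace ℝ (Fin m)) y).2‖ ≤ Real.sqrt (n * ψ))
    (hq1 : |(WithLp.equiv 2 (ℝ × EuclideanSpace ℝ (Fin m)) q).1 - lam| ≤ ψ)
    (hq2 : ‖(WithLp.equiv 2 (ℝ × EuclideanSpace ℝ (Fin m)) q).2‖ ≥ K * v) :
    ‖x - q‖ + ‖q - y‖ - ‖x - y‖ ≥ K ^ 2 / 8 * ψ * L ^ (2 * β) := by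
  change |x.fst| ≤ ψ at hx1
  change ‖x.snd‖ ≤ Real.sqrt (n * ψ) at hx2
  change |y.fst - n| ≤ ψ at hy1
  change ‖y.snd‖ ≤ Real.sqrt (n * ψ) at hy2
  change |q.fst - lam| ≤ ψ at hq1
  change ‖q.snd‖ ≥ K * v at hq2
  have hn : 0 < n := by linarith only [hψ, hψn]
  -- opaque abbreviation for the sqrt
  obtain ⟨s, hsdef⟩ : ∃ a : ℝ, Real.sqrt (n * ψ) = a := ⟨_, rfl⟩
  rw [hsdef] at hx2 hy2 hKv hv
  have hs0 : 0 ≤ s := hsdef ▸ Real.sqrt_nonneg _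
  have hs2 : s ^ 2 = n * ψ := by rw [← hsdef]; exact Real.sq_sqrt (by positivity)
  have hspos : 0 < s := by rw [← hsdef]; exact Real.sqrt_pos.mpr (by positivity)
  have hs_le : s ≤ n / 10 := by nlinarith only [hs2, hψn, hs0, hn]
  have hL0 : (0:ℝ) < L := lt_of_lt_of_le one_pos hL
  obtain ⟨t, htdef⟩ : ∃ a : ℝ, K * v = a := ⟨_, rfl⟩
  rw [htdef] at hKv hKv' hq2
  have ht2s : 2 * s ≤ t := hKv
  have htn : t ≤ n := hKv'
  have ht0 : 0 < t := by linarith only [ht2s, hspos]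
  obtain ⟨M, hMdef⟩ : ∃ a : ℝ, y.fst - x.fst = a := ⟨_, rfl⟩
  obtain ⟨C, hCdef⟩ : ∃ a : ℝ, ‖x.snd - y.snd‖ = a := ⟨_, rfl⟩
  obtain ⟨r, hrdef⟩ : ∃ a : ℝ, ‖x.snd + y.snd‖ = a := ⟨_, rfl⟩
  obtain ⟨P, hPdef⟩ : ∃ a : ℝ, ‖x.snd - q.snd‖ + ‖q.snd - y.snd‖ = a := ⟨_, rfl⟩
  have hC0 : 0 ≤ C := hCdef ▸ norm_nonneg _
  have hr0 : 0 ≤ r := hrdef ▸ norm_nonneg _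
  have hx1' := abs_le.mp hx1
  have hy1' := abs_le.mp hy1
  have hM1 : n - 2*ψ ≤ M := by rw [← hMdef]; linarith only [hx1'.2, hy1'.1]
  have hM2 : M ≤ n + 2*ψ := by rw [← hMdef]; linarith only [hx1'.1, hy1'.2]
  have hM0 : 0 ≤ M := by linarith only [hM1, hψ, hψn]
  -- parallelogram law
  have hpar : C^2 + r^2 ≤ 4 * s^2 := by
    have hp := parallelogram_law_with_norm ℝ x.snd y.snd
    have h1 : ‖x.snd‖ * ‖x.snd‖ ≤ s * s := mul_le_mul hx2 hx2 (norm_nonneg _) hs0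
    have h2 : ‖y.snd‖ * ‖y.snd‖ ≤ s * s := mul_le_mul hy2 hy2 (norm_nonneg _) hs0
    have e1 : C^2 = ‖x.snd - y.snd‖ * ‖x.snd - y.snd‖ := by rw [← hCdef]; ring
    have e2 : r^2 = ‖x.snd + y.snd‖ * ‖x.snd + y.snd‖ := by rw [← hrdef]; ring
    have e3 : (4:ℝ) * s^2 = 2*(s*s + s*s) := by ring
    rw [e1, e2, e3]
    linarith only [hp, h1, h2]
  have hr2s : r ≤ 2 * s := by nlinarith only [hpar, sq_nonneg C, hr0, hs0]
  have hC2s : C ≤ 2 * s := by nlinarith only [hpar, sq_nonneg r, hC0, hs0]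
  -- P lower bound
  have hP0 : 2 * t - r ≤ P := by
    have h1 : ‖(q.snd - x.snd) + (q.snd - y.snd)‖ ≤ ‖q.snd - x.snd‖ + ‖q.snd - y.snd‖ :=
      norm_add_le _ _
    have e : (q.snd - x.snd) + (q.snd - y.snd) = (q.snd + q.snd) - (x.snd + y.snd) := by
      abel
    have h2 : ‖q.snd + q.snd‖ - ‖x.snd + y.snd‖ ≤ ‖(q.snd + q.snd) - (x.snd + y.snd)‖ :=
      norm_sub_norm_le _ _
    have h3 : ‖q.snd + q.snd‖ = 2 * ‖q.snd‖ := by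
      rw [← two_smul ℝ, norm_smul]; simp
    have h4 : ‖q.snd - x.snd‖ = ‖x.snd - q.snd‖ := norm_sub_rev _ _
    rw [e] at h1
    rw [← hPdef, ← hrdef, ← h4]
    linarith only [h1, h2, h3, hq2]
  obtain ⟨P0, hP0def⟩ : ∃ a : ℝ, 2 * t - r = a := ⟨_, rfl⟩
  rw [hP0def] at hP0
  have hP00 : 0 ≤ P0 := by rw [← hP0def]; linarith only [ht2s, hr2s, hspos]
  -- norm formulas
  have hxq : ‖x - q‖ = Real.sqrt ((q.fst - x.fst)^2 + ‖x.snd - q.snd‖^2) := by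
    rw [WithLp.prod_norm_eq_of_L2]
    have e1 : (x - q).fst = x.fst - q.fst := rfl
    have e2 : (x - q).snd = x.snd - q.snd := rfl
    rw [e1, e2, Real.norm_eq_abs, sq_abs]
    ring_nf
  have hqy : ‖q - y‖ = Real.sqrt ((y.fst - q.fst)^2 + ‖q.snd - y.snd‖^2) := by
    rw [WithLp.prod_norm_eq_of_L2]
    have e1 : (q - y).fst = q.fst - y.fst := rfl
    have e2 : (q - y).snd = q.snd - y.snd := rfl
    rw [e1, e2, Real.norm_eq_abs, sq_abs]
    ring_nf
  have hxy : ‖x - y‖ = Real.sqrt (M^2 + C^2) := by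
    rw [WithLp.prod_norm_eq_of_L2]
    have e1 : (x - y).fst = x.fst - y.fst := rfl
    have e2 : (x - y).snd = x.snd - y.snd := rfl
    rw [e1, e2, Real.norm_eq_abs, sq_abs]
    congr 1
    rw [← hMdef, ← hCdef]
    ring
  -- Minkowski
  have hmink : Real.sqrt (M^2 + P^2) ≤ ‖x - q‖ + ‖q - y‖ := by
    rw [hxq, hqy]
    have h := aux_mink18 (q.fst - x.fst) ‖x.snd - q.snd‖ (y.fst - q.fst) ‖q.snd - y.snd‖
    have e : (q.fst - x.fst + (y.fst - q.fst)) = M := by rw [← hMdef]; ring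
    rw [e, hPdef] at h
    exact h
  -- monotone in P
  have hmono : Real.sqrt (M^2 + P0^2) ≤ Real.sqrt (M^2 + P^2) := by
    apply Real.sqrt_le_sqrt
    have h : P0^2 ≤ P^2 := pow_le_pow_left₀ hP00 hP0 2
    linarith only [h]
  -- key scalar inequality
  obtain ⟨T, hTdef⟩ : ∃ a : ℝ, t^2 / (8*n) = a := ⟨_, rfl⟩
  have hT0 : 0 ≤ T := by rw [← hTdef]; positivity
  have hMC : Real.sqrt (M^2 + C^2) ≤ M + C := by
    have h := Real.sqrt_le_sqrt
      (show M^2 + C^2 ≤ (M+C)^2 by nlinarith only [mul_nonneg hM0 hC0])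
    rwa [Real.sqrt_sq (by positivity)] at h
  have hstep1 : t^2 ≤ P0^2 - C^2 := by
    rw [← hP0def]
    nlinarith only [hpar,
      mul_nonneg (sub_nonneg.2 hr2s) (show (0:ℝ) ≤ 2*t - 2*s - r by
        linarith only [ht2s, hr2s]),
      mul_nonneg (sub_nonneg.2 ht2s) (show (0:ℝ) ≤ 3*t - 2*s by
        linarith only [ht2s, hs0])]
  have hmul : 16*n*t^2*(M+C) + t^4 ≤ 64*n^2*t^2 := by
    have hMCn : M + C ≤ 61/50 * n := by linarith only [hM2, hC2s, hs_le, hψn]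
    have h1 : 16*n*t^2*(M+C) ≤ 16*n*t^2*(61/50*n) :=
      mul_le_mul_of_nonneg_left hMCn (by positivity)
    have ht2 : t^2 ≤ n^2 := by nlinarith only [htn, ht0]
    have h2 : t^2*t^2 ≤ t^2*n^2 := mul_le_mul_of_nonneg_left ht2 (sq_nonneg t)
    nlinarith only [h1, h2, sq_nonneg (n*t)]
  have hstep2 : 2*T*(M+C) + T^2 ≤ t^2 := by
    have e : 2*T*(M+C) + T^2 = (16*n*t^2*(M+C) + t^4) / (64*n^2) := by
      rw [← hTdef]; field_simp; ring
    rw [e, div_le_iff₀ (by positivity : (0:ℝ) < 64*n^2)]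
    linarith only [hmul]
  have hkey : Real.sqrt (M^2 + C^2) + T ≤ Real.sqrt (M^2 + P0^2) := by
    have hsq : (Real.sqrt (M^2 + C^2) + T)^2 ≤ M^2 + P0^2 := by
      have e1 : (Real.sqrt (M^2 + C^2))^2 = M^2 + C^2 := Real.sq_sqrt (by positivity)
      have h2T : (2*T) * Real.sqrt (M^2 + C^2) ≤ (2*T) * (M + C) :=
        mul_le_mul_of_nonneg_left hMC (by linarith only [hT0])
      nlinarith only [h2T, hstep2, hstep1, e1]
    calc Real.sqrt (M^2 + C^2) + T
        = Real.sqrt ((Real.sqrt (M^2 + C^2) + T)^2) := (Real.sqrt_sq (by positivity)).symm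
      _ ≤ Real.sqrt (M^2 + P0^2) := Real.sqrt_le_sqrt hsq
  -- identify T with the target
  have hLb : L ^ (2*β) = (L ^ β)^2 := by
    rw [mul_comm, Real.rpow_mul hL0.le]
    norm_num
  have hT_eq : T = K^2/8 * ψ * L ^ (2*β) := by
    rw [← hTdef, ← htdef, hv, hLb]
    have e : (K * (s * L^β))^2 = K^2 * (s^2) * (L^β)^2 := by ring
    rw [e, hs2]
    field_simp
  rw [← hT_eq, hxy]
  linarith only [hmink, hmono, hkey]
end
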